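/- Let K be a field, and let x, y, s, p, q ∈ K with x ≠ 0, y ≠ 0, and u := 1 + s*x/y ≠ 0. Define x' = x/u and y' = y/u. Then y' + p/y' + q/y' + s*x' + s*p/(x'*y'^2) = y + (p + q)*(1/y + s*x/y^2) + (s*p/(x*y^2))*(1 + s*x/y)^3. -/

import Mathlib

theorem stmt_12 {K : Type*} [Field K] (x y s p q : K)
    (hx : x ≠ 0) (hy : y ≠ 0) (hu : 1 + s*x/y ≠ 0) :
    let u := 1 + s*x/y
    let x' := x/u
    let y' := y/u
    y' + p/y' + q/y' + s*x' + s*p/(x'*y'^2)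
      = y + (p + q)*(1/y + s*x/y^2) + (s*p/(x*y^2))*(1 + s*x/y)^3 := by
  have h1 : y + s*x ≠ 0 := by
    intro h
    apply hu
    field_simp
    linear_combination h
  have hrw : 1 + s*x/y = (y + s*x)/y := by field_simp
  show y/(1+s*x/y) + p/(y/(1+s*x/y)) + q/(y/(1+s*x/y)) + s*(x/(1+s*x/y))
      + s*p/((x/(1+s*x/y))*(y/(1+s*x/y))^2)
      = y + (p + q)*(1/y + s*x/y^2) + (s*p/(x*y^2))*(1 + s*x/y)^3
  rw [hrw]
  generalize hv : y + s*x = v at h1 ⊢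
  have hvpair : (y + s*x = v) ∧ True := ⟨hv, trivial⟩
  clear hv hrw hu
  field_simp
  obtain ⟨hv, -⟩ := hvpair
  rw [← hv]
  ring
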